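/- (Proposition 1, under-provisioned case) Fix μ > 0, a = b = 7/2, and a real T̄ with 0 < T̄ < μ. Then lim_{K→∞} P_b(K, ⌊K·T̄⌋) = 1 − T̄/μ, where the limit is over positive integers K tending to infinity. -/

import Mathlib

open scoped BigOperators

/-- The distribution of the number of users in the coverage of a cluster of `K` RRUs:
`P_K(n) = b^{Ka} μ^n Γ(n + Ka) / ((μ + b)^{Ka+n} Γ(Ka) n!)` with `a = b = 7/2`. -/
noncomputable def Puser (μ : ℝ) (K : ℕ) (n : ℕ) : ℝ :=
  (7/2 : ℝ) ^ ((K : ℝ) * (7/2)) * μ ^ n * Real.Gamma ((n : ℝ) + (K : ℝ) * (7/2)) /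
    ((μ + 7/2) ^ ((K : ℝ) * (7/2) + (n : ℝ)) * Real.Gamma ((K : ℝ) * (7/2)) *
      (n.factorial : ℝ))

/-- The `n`-th summand of the user blocking probability: `((n − T)/n)·P_K(n)` for
`n ≥ T + 1`, and `0` otherwise. -/
noncomputable def blockTerm (μ : ℝ) (K T : ℕ) (n : ℕ) : ℝ :=
  if T + 1 ≤ n then (((n : ℝ) - (T : ℝ)) / (n : ℝ)) * Puser μ K n else 0

/-- The user blocking probability `P_b(K,T) = Σ_{n=T+1}^∞ ((n − T)/n)·P_K(n)`. -/
noncomputable def Pblock (μ : ℝ) (K T : ℕ) : ℝ := ∑' n : ℕ, blockTerm μ K T n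

open Real Filter MeasureTheory Set Topology

section Aux

variable {μ : ℝ} {K : ℕ}

lemma s_pos (hK : 0 < K) : (0:ℝ) < (K:ℝ) * (7/2) :=
  mul_pos (by exact_mod_cast hK) (by norm_num)

lemma Puser_pos (hμ : 0 < μ) (hK : 0 < K) (n : ℕ) : 0 < Puser μ K n := by
  have hs : (0:ℝ) < (K:ℝ)*(7/2) := s_pos hK
  have h1 : (0:ℝ) < (n:ℝ) + (K:ℝ)*(7/2) := by positivity
  have hΓ1 := Real.Gamma_pos_of_pos hs
  have hΓ2 := Real.Gamma_pos_of_pos h1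
  have hμb : (0:ℝ) < μ + 7/2 := by linarith
  have hf : (0:ℝ) < (n.factorial : ℝ) := by exact_mod_cast n.factorial_pos
  unfold Puser
  exact div_pos (by positivity) (by positivity)

lemma Puser_rec (hμ : 0 < μ) (hK : 0 < K) (n : ℕ) :
    ((n:ℝ)+1) * Puser μ K (n+1)
      = μ/(μ + 7/2) * (((n:ℝ) + (K:ℝ)*(7/2)) * Puser μ K n) := by
  have hs := s_pos hK
  have hns : (0:ℝ) < (n:ℝ) + (K:ℝ)*(7/2) := by positivity
  have hμb : (0:ℝ) < μ + 7/2 := by linarith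
  have hΓ : Real.Gamma (((n+1:ℕ):ℝ) + (K:ℝ)*(7/2))
      = ((n:ℝ) + (K:ℝ)*(7/2)) * Real.Gamma ((n:ℝ) + (K:ℝ)*(7/2)) := by
    have h : (((n+1:ℕ):ℝ) + (K:ℝ)*(7/2)) = ((n:ℝ) + (K:ℝ)*(7/2)) + 1 := by push_cast; ring
    rw [h, Real.Gamma_add_one (ne_of_gt hns)]
  have hpow : (μ + 7/2) ^ ((K:ℝ)*(7/2) + ((n+1:ℕ):ℝ))
      = (μ + 7/2) ^ ((K:ℝ)*(7/2) + (n:ℝ)) * (μ + 7/2) := by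
    rw [show ((K:ℝ)*(7/2) + ((n+1:ℕ):ℝ)) = ((K:ℝ)*(7/2) + (n:ℝ)) + 1 by push_cast; ring,
      Real.rpow_add_one (ne_of_gt hμb)]
  have hfact : (((n+1).factorial : ℕ):ℝ) = ((n:ℝ)+1) * (n.factorial:ℝ) := by
    push_cast [Nat.factorial_succ]; ring
  have hΓK := Real.Gamma_pos_of_pos hs
  have hf : (0:ℝ) < (n.factorial : ℝ) := by exact_mod_cast n.factorial_pos
  have hpow2 : (0:ℝ) < (μ + 7/2) ^ ((K:ℝ)*(7/2) + (n:ℝ)) := Real.rpow_pos_of_pos hμb _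
  unfold Puser
  rw [hΓ, hpow, hfact, pow_succ]
  field_simp


lemma summable_pow_mul_Puser (hμ : 0 < μ) (hK : 0 < K) (j : ℕ) :
    Summable (fun n : ℕ => (n:ℝ)^j * Puser μ K n) := by
  have hμb : (0:ℝ) < μ + 7/2 := by linarith
  have hp0 : 0 < μ/(μ+7/2) := by positivity
  have hp1 : μ/(μ+7/2) < 1 := by rw [div_lt_one hμb]; linarith
  set s : ℝ := (K:ℝ)*(7/2) with hs_def
  apply summable_of_ratio_test_tendsto_lt_one hp1
  · filter_upwards [eventually_ge_atTop 1] with n hn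
    have hP := Puser_pos hμ hK n
    have hn' : (0:ℝ) < (n:ℝ) := by exact_mod_cast hn
    positivity
  · have hA : Tendsto (fun n : ℕ => ((n:ℝ)+1)/(n:ℝ)) atTop (𝓝 1) := by
      have h0 : Tendsto (fun n : ℕ => 1 + 1/(n:ℝ)) atTop (𝓝 1) := by
        simpa using (tendsto_const_nhds (x := (1:ℝ))).add tendsto_one_div_atTop_nhds_zero_nat
      apply h0.congr'
      filter_upwards [eventually_ge_atTop 1] with n hn
      have hn' : ((n:ℝ)) ≠ 0 := by positivity
      field_simp
    have hB : Tendsto (fun n : ℕ => ((n:ℝ)+s)/((n:ℝ)+1)) atTop (𝓝 1) := by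
      have h0 : Tendsto (fun n : ℕ => 1 + (s-1) * (1/((n:ℝ)+1))) atTop (𝓝 1) := by
        simpa using tendsto_const_nhds.add
          (tendsto_one_div_add_atTop_nhds_zero_nat.const_mul (s-1))
      apply h0.congr
      intro n
      have : ((n:ℝ)+1) ≠ 0 := by positivity
      field_simp
      ring
    have hg : Tendsto (fun n : ℕ => (((n:ℝ)+1)/(n:ℝ))^j * (μ/(μ+7/2)) * (((n:ℝ)+s)/((n:ℝ)+1)))
        atTop (𝓝 (μ/(μ+7/2))) := by
      have := ((hA.pow j).mul (tendsto_const_nhds (x := μ/(μ+7/2)))).mul hB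
      simpa using this
    apply hg.congr'
    filter_upwards [eventually_ge_atTop 1] with n hn
    have hn' : (0:ℝ) < (n:ℝ) := by exact_mod_cast hn
    have hP := Puser_pos hμ hK n
    have hP' := Puser_pos hμ hK (n+1)
    have hns : (0:ℝ) < (n:ℝ) + s := by positivity
    have hrec : Puser μ K (n+1)
        = μ/(μ + 7/2) * (((n:ℝ) + s) * Puser μ K n) / ((n:ℝ)+1) := by
      rw [eq_div_iff (by positivity : ((n:ℝ)+1) ≠ 0)]
      rw [mul_comm (Puser μ K (n+1)) ((n:ℝ)+1)] 
      exact (Puser_rec hμ hK n).symm ▸ rfl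
    rw [Real.norm_eq_abs, Real.norm_eq_abs,
      abs_of_pos (by positivity), abs_of_pos (by positivity : (0:ℝ) < (n:ℝ)^j * Puser μ K n)]
    push_cast
    rw [hrec]
    field_simp
    ring
    rw [← mul_pow, mul_add, mul_inv_cancel₀ hn'.ne']
    ring


lemma exp_real_eq_tsum (x : ℝ) : Real.exp x = ∑' n : ℕ, x ^ n / (n.factorial : ℝ) := by
  rw [Real.exp_eq_exp_ℝ, NormedSpace.exp_eq_tsum_div]

lemma tsum_Puser (hμ : 0 < μ) (hK : 0 < K) : ∑' n, Puser μ K n = 1 := by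
  have hμb : (0:ℝ) < μ + 7/2 := by linarith
  set s : ℝ := (K:ℝ)*(7/2) with hs_def
  have hs : 0 < s := s_pos hK
  set c : ℝ := (7/2)/μ with hc_def
  have hc : 0 < c := by positivity
  have hΓs : 0 < Real.Gamma s := Real.Gamma_pos_of_pos hs
  have h1c : (0:ℝ) < 1 + c := by linarith
  set F : ℕ → ℝ → ℝ := fun n t => (c ^ s / (Real.Gamma s * (n.factorial:ℝ))) *
      (t ^ ((n:ℝ) + s - 1) * Real.exp (-((1+c) * t))) with hF_def
  have hFint : ∀ n : ℕ, IntegrableOn (F n) (Ioi 0) := by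
    intro n
    apply Integrable.const_mul
    have hgt : (-1:ℝ) < (n:ℝ) + s - 1 := by
      have : (0:ℝ) ≤ (n:ℝ) := n.cast_nonneg
      linarith
    have h := integrableOn_rpow_mul_exp_neg_mul_rpow hgt zero_lt_one h1c
    apply h.congr_fun ?_ measurableSet_Ioi
    intro t ht
    simp only [Real.rpow_one, neg_mul]
  have hFval : ∀ n : ℕ, ∫ t in Ioi 0, F n t = Puser μ K n := by
    intro n
    have hns : 0 < (n:ℝ) + s := by positivity
    rw [MeasureTheory.integral_const_mul, integral_rpow_mul_exp_neg_mul_Ioi hns h1c]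
    have h1 : (1:ℝ)/(1+c) = μ/(μ + 7/2) := by
      rw [hc_def]; field_simp
    have h3 : (μ/(μ+7/2)) ^ ((n:ℝ)+s) = μ^((n:ℝ)+s) / (μ+7/2)^((n:ℝ)+s) :=
      Real.div_rpow hμ.le hμb.le _
    have h4 : μ^((n:ℝ)+s) = μ^(n:ℕ) * μ^s := by
      rw [Real.rpow_add hμ, Real.rpow_natCast]
    have h5 : c^s = (7/2:ℝ)^s / μ^s := by
      rw [hc_def]; exact Real.div_rpow (by norm_num) hμ.le s
    have h6 : (μ+7/2)^((n:ℝ)+s) = (μ+7/2)^(s+(n:ℝ)) := by rw [add_comm ((n:ℝ)) s]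
    rw [h1, h3, h4, h5, h6]
    unfold Puser
    rw [← hs_def]
    have hne1 : μ^s ≠ 0 := ne_of_gt (Real.rpow_pos_of_pos hμ _)
    have hne2 : (μ+7/2)^(s+(n:ℝ)) ≠ 0 := ne_of_gt (Real.rpow_pos_of_pos hμb _)
    have hne3 : Real.Gamma s ≠ 0 := ne_of_gt hΓs
    have hne4 : ((n.factorial : ℕ):ℝ) ≠ 0 := by
      exact_mod_cast n.factorial_ne_zero
    field_simp
  have hnorm : ∀ n : ℕ, (∫ t in Ioi 0, ‖F n t‖) = Puser μ K n := by
    intro n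
    rw [← hFval n]
    apply MeasureTheory.setIntegral_congr_fun measurableSet_Ioi
    intro t ht
    have ht' : (0:ℝ) < t := ht
    show ‖F n t‖ = F n t
    rw [Real.norm_eq_abs, abs_of_nonneg]
    simp only [hF_def]
    positivity
  have hsum : Summable (fun n : ℕ => ∫ t in Ioi 0, ‖F n t‖) := by
    have h0 := summable_pow_mul_Puser hμ hK 0
    simp only [pow_zero, one_mul] at h0
    exact (summable_congr (fun n => by rw [hnorm n])).mpr h0
  have hswap := MeasureTheory.integral_tsum_of_summable_integral_norm
      (μ := volume.restrict (Ioi 0)) hFint hsum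
  have hpt : ∀ t ∈ Ioi 0, (∑' n, F n t)
      = (c^s/Real.Gamma s) * (t^(s-1) * Real.exp (-(c*t))) := by
    intro t ht
    have ht' : (0:ℝ) < t := ht
    have hptw : ∀ n : ℕ, F n t
        = t^(n:ℕ) / (n.factorial:ℝ) * ((c^s/Real.Gamma s) * (t^(s-1) * Real.exp (-(c*t))) * Real.exp (-t)) := by
      intro n
      simp only [hF_def]
      have e1 : t ^ ((n:ℝ)+s-1) = t^(n:ℕ) * t^(s-1) := by
        rw [show (n:ℝ)+s-1 = (n:ℝ) + (s-1) by ring, Real.rpow_add ht', Real.rpow_natCast]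
      have e2 : Real.exp (-((1+c)*t)) = Real.exp (-t) * Real.exp (-(c*t)) := by
        rw [← Real.exp_add]; ring_nf
      rw [e1, e2]
      field_simp
    rw [tsum_congr hptw, tsum_mul_right, ← exp_real_eq_tsum]
    rw [show Real.exp t * ((c^s/Real.Gamma s) * (t^(s-1) * Real.exp (-(c*t))) * Real.exp (-t))
        = (Real.exp t * Real.exp (-t)) * ((c^s/Real.Gamma s) * (t^(s-1) * Real.exp (-(c*t)))) by ring,
      ← Real.exp_add]
    simp
  calc ∑' n, Puser μ K n = ∑' n, ∫ t in Ioi 0, F n t := by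
        exact tsum_congr (fun n => (hFval n).symm)
    _ = ∫ t in Ioi 0, ∑' n, F n t := hswap
    _ = ∫ t in Ioi 0, (c^s/Real.Gamma s) * (t^(s-1) * Real.exp (-(c*t))) := by
        exact MeasureTheory.setIntegral_congr_fun measurableSet_Ioi hpt
    _ = 1 := by
        rw [MeasureTheory.integral_const_mul, integral_rpow_mul_exp_neg_mul_Ioi hs hc]
        rw [one_div, Real.inv_rpow hc.le]
        field_simp


lemma summable_Puser (hμ : 0 < μ) (hK : 0 < K) : Summable (Puser μ K) := by
  have h := summable_pow_mul_Puser hμ hK 0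
  simpa using h

lemma summable_mul_Puser (hμ : 0 < μ) (hK : 0 < K) :
    Summable (fun n : ℕ => (n:ℝ) * Puser μ K n) := by
  have h := summable_pow_mul_Puser hμ hK 1
  simpa using h

lemma summable_sq_mul_Puser (hμ : 0 < μ) (hK : 0 < K) :
    Summable (fun n : ℕ => (n:ℝ)^2 * Puser μ K n) := summable_pow_mul_Puser hμ hK 2

lemma tsum_mul_Puser (hμ : 0 < μ) (hK : 0 < K) :
    ∑' n : ℕ, (n:ℝ) * Puser μ K n = (K:ℝ) * μ := by
  have hμb : (0:ℝ) < μ + 7/2 := by linarith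
  set s : ℝ := (K:ℝ)*(7/2) with hs_def
  set S1 : ℝ := ∑' n : ℕ, (n:ℝ) * Puser μ K n with hS1_def
  have hsum := summable_mul_Puser hμ hK
  have h0 : S1 = ∑' n : ℕ, ((n:ℝ)+1) * Puser μ K (n+1) := by
    rw [hS1_def, Summable.tsum_eq_zero_add hsum]
    push_cast
    simp
  have h1 : S1 = ∑' n : ℕ, (μ/(μ+7/2) * ((n:ℝ) * Puser μ K n)
      + (μ/(μ+7/2) * s) * Puser μ K n) := by
    rw [h0]
    apply tsum_congr
    intro n
    rw [Puser_rec hμ hK n]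
    ring
  rw [Summable.tsum_add (hsum.mul_left _) ((summable_Puser hμ hK).mul_left _),
    tsum_mul_left, tsum_mul_left, tsum_Puser hμ hK, ← hS1_def] at h1
  have hμb' : μ + 7/2 ≠ 0 := ne_of_gt hμb
  have : S1 * (7/2) = μ * s := by
    field_simp at h1
    nlinarith [h1]
  rw [hs_def] at this
  nlinarith [this]

lemma tsum_sq_mul_Puser (hμ : 0 < μ) (hK : 0 < K) :
    ∑' n : ℕ, (n:ℝ)^2 * Puser μ K n
      = ((K:ℝ)*μ)^2 + (2/7)*(K:ℝ)*μ*(μ+7/2) := by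
  have hμb : (0:ℝ) < μ + 7/2 := by linarith
  set s : ℝ := (K:ℝ)*(7/2) with hs_def
  set S2 : ℝ := ∑' n : ℕ, (n:ℝ)^2 * Puser μ K n with hS2_def
  have hsum2 := summable_sq_mul_Puser hμ hK
  have hsum1 := summable_mul_Puser hμ hK
  have hsum0 := summable_Puser hμ hK
  have h0 : S2 = ∑' n : ℕ, ((n:ℝ)+1)^2 * Puser μ K (n+1) := by
    rw [hS2_def, Summable.tsum_eq_zero_add hsum2]
    push_cast
    simp
  have h1 : S2 = ∑' n : ℕ, (μ/(μ+7/2) * ((n:ℝ)^2 * Puser μ K n)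
      + ((μ/(μ+7/2) * (s+1)) * ((n:ℝ) * Puser μ K n)
      + (μ/(μ+7/2) * s) * Puser μ K n)) := by
    rw [h0]
    apply tsum_congr
    intro n
    have hrec := Puser_rec hμ hK n
    have : ((n:ℝ)+1)^2 * Puser μ K (n+1) = ((n:ℝ)+1) * (((n:ℝ)+1) * Puser μ K (n+1)) := by ring
    rw [this, hrec]
    ring
  rw [Summable.tsum_add (hsum2.mul_left _) ((hsum1.mul_left _).add (hsum0.mul_left _)),
    Summable.tsum_add (hsum1.mul_left _) (hsum0.mul_left _),
    tsum_mul_left, tsum_mul_left, tsum_mul_left,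
    tsum_Puser hμ hK, tsum_mul_Puser hμ hK, ← hS2_def] at h1
  have hμb' : μ + 7/2 ≠ 0 := ne_of_gt hμb
  have h2 : S2 * (7/2) = μ * (s+1) * ((K:ℝ)*μ) + μ * s := by
    field_simp at h1
    nlinarith [h1]
  rw [hs_def] at h2
  nlinarith [h2]

lemma tsum_var_Puser (hμ : 0 < μ) (hK : 0 < K) :
    ∑' n : ℕ, ((n:ℝ) - (K:ℝ)*μ)^2 * Puser μ K n = (2/7)*(K:ℝ)*μ*(μ+7/2) := by
  have hsum2 := summable_sq_mul_Puser hμ hK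
  have hsum1 := summable_mul_Puser hμ hK
  have hsum0 := summable_Puser hμ hK
  have h : ∀ n : ℕ, ((n:ℝ) - (K:ℝ)*μ)^2 * Puser μ K n
      = (n:ℝ)^2 * Puser μ K n - (2*(K:ℝ)*μ) * ((n:ℝ) * Puser μ K n)
        + ((K:ℝ)*μ)^2 * Puser μ K n := by
    intro n; ring
  rw [tsum_congr h,
    Summable.tsum_add ((hsum2.sub (hsum1.mul_left _))) (hsum0.mul_left _),
    Summable.tsum_sub hsum2 (hsum1.mul_left _), tsum_mul_left, tsum_mul_left,
    tsum_Puser hμ hK, tsum_mul_Puser hμ hK, tsum_sq_mul_Puser hμ hK]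
  ring


lemma blockTerm_nonneg (hμ : 0 < μ) (hK : 0 < K) (T n : ℕ) :
    0 ≤ blockTerm μ K T n := by
  unfold blockTerm
  split
  · next h =>
    have hP := Puser_pos hμ hK n
    have hn : (0:ℝ) < (n:ℝ) := by
      have : 0 < n := by omega
      exact_mod_cast this
    have hTn : (T:ℝ) + 1 ≤ (n:ℝ) := by exact_mod_cast h
    have : (0:ℝ) ≤ ((n:ℝ) - (T:ℝ)) / (n:ℝ) := by
      apply div_nonneg (by linarith) hn.le
    positivity
  · exact le_refl 0

lemma blockTerm_le (hμ : 0 < μ) (hK : 0 < K) (T n : ℕ) :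
    blockTerm μ K T n ≤ Puser μ K n := by
  unfold blockTerm
  split
  · next h =>
    have hP := Puser_pos hμ hK n
    have hn : (0:ℝ) < (n:ℝ) := by
      have : 0 < n := by omega
      exact_mod_cast this
    have hT0 : (0:ℝ) ≤ (T:ℝ) := T.cast_nonneg
    have : ((n:ℝ) - (T:ℝ)) / (n:ℝ) ≤ 1 := by
      rw [div_le_one hn]; linarith
    nlinarith
  · exact (Puser_pos hμ hK n).le

lemma summable_blockTerm (hμ : 0 < μ) (hK : 0 < K) (T : ℕ) :
    Summable (blockTerm μ K T) :=
  Summable.of_nonneg_of_le (blockTerm_nonneg hμ hK T) (blockTerm_le hμ hK T)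
    (summable_Puser hμ hK)

lemma abs_Pblock_sub_le (hμ : 0 < μ) (Tbar : ℝ) (hT0 : 0 < Tbar) (hT : Tbar < μ)
    {δ : ℝ} (hδ0 : 0 < δ) (hδ1 : δ ≤ μ - Tbar) (hK : 0 < K) :
    |Pblock μ K ⌊(K:ℝ)*Tbar⌋₊ - (1 - Tbar/μ)|
      ≤ (Tbar/(μ-δ) - Tbar/(μ+δ)) + 1/((K:ℝ)*(μ-δ))
        + ((2/7)*μ*(μ+7/2))/((K:ℝ)*δ^2) := by
  have hK' : (0:ℝ) < (K:ℝ) := by exact_mod_cast hK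
  have hμδ : 0 < μ - δ := by linarith
  have hμδ' : 0 < μ + δ := by linarith
  set T : ℕ := ⌊(K:ℝ)*Tbar⌋₊ with hT_def
  set L : ℝ := 1 - Tbar/μ with hL_def
  set cδ : ℝ := Tbar/(μ-δ) - Tbar/(μ+δ) with hcδ_def
  set e : ℝ := 1/((K:ℝ)*(μ-δ)) with he_def
  have hcδ0 : 0 ≤ cδ := by
    rw [hcδ_def, sub_nonneg]
    exact div_le_div_of_nonneg_left hT0.le hμδ (by linarith)
  have he0 : 0 ≤ e := by
    rw [he_def]
    exact le_of_lt (one_div_pos.mpr (mul_pos hK' hμδ))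
  have hL0 : 0 ≤ L := by
    rw [hL_def, sub_nonneg, div_le_one hμ]; linarith
  have hL1 : L ≤ 1 := by
    rw [hL_def]
    have : 0 ≤ Tbar/μ := by positivity
    linarith
  have hTle : (T:ℝ) ≤ (K:ℝ)*Tbar := Nat.floor_le (by positivity)
  have hTgt : (K:ℝ)*Tbar - 1 < (T:ℝ) := Nat.sub_one_lt_floor _
  set P : ℕ → ℝ := Puser μ K with hP_def
  set d : ℕ → ℝ := fun n => blockTerm μ K T n - L * P n with hd_def
  set χ : ℕ → ℝ := fun n => if (K:ℝ)*δ ≤ |(n:ℝ) - (K:ℝ)*μ| then P n else 0 with hχ_def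
  set u : ℕ → ℝ := fun n => (cδ + e) * P n + χ n with hu_def
  set w : ℕ → ℝ := fun n => (((n:ℝ) - (K:ℝ)*μ)^2 / ((K:ℝ)*δ)^2) * P n with hw_def
  have SP := summable_Puser hμ hK
  have Sb := summable_blockTerm hμ hK T
  have Sd : Summable d := Sb.sub (SP.mul_left L)
  have hχ_nonneg : ∀ n, 0 ≤ χ n := by
    intro n
    simp only [hχ_def]
    split
    · exact (Puser_pos hμ hK n).le
    · exact le_refl 0
  have hχ_le : ∀ n, χ n ≤ P n := by
    intro n
    simp only [hχ_def]
    split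
    · exact le_refl _
    · exact (Puser_pos hμ hK n).le
  have Sχ : Summable χ := Summable.of_nonneg_of_le hχ_nonneg hχ_le SP
  have Svar : Summable (fun n : ℕ => ((n:ℝ) - (K:ℝ)*μ)^2 * P n) := by
    have h := ((summable_sq_mul_Puser hμ hK).sub
        ((summable_mul_Puser hμ hK).mul_left (2*(K:ℝ)*μ))).add (SP.mul_left (((K:ℝ)*μ)^2))
    apply h.congr
    intro n
    simp only [hP_def]
    ring
  have Sw : Summable w := by
    have := Svar.mul_left (1/((K:ℝ)*δ)^2)
    apply this.congr
    intro n
    simp only [hw_def]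
    ring
  have Su : Summable u := (SP.mul_left _).add Sχ
  -- pointwise bound
  have hdu : ∀ n, |d n| ≤ u n := by
    intro n
    have hP' := Puser_pos hμ hK n
    by_cases hA : |(n:ℝ) - (K:ℝ)*μ| < (K:ℝ)*δ
    · have hχn : χ n = 0 := by simp only [hχ_def]; exact if_neg (not_le.mpr hA)
      obtain ⟨hA1, hA2⟩ := abs_lt.mp hA
      have hexp1 : (K:ℝ)*(μ-δ) = (K:ℝ)*μ - (K:ℝ)*δ := by ring
      have hexp2 : (K:ℝ)*(μ+δ) = (K:ℝ)*μ + (K:ℝ)*δ := by ring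
      have hxlow : (K:ℝ)*(μ-δ) < (n:ℝ) := by rw [hexp1]; linarith
      have hxhi : (n:ℝ) < (K:ℝ)*(μ+δ) := by rw [hexp2]; linarith
      have hKμδ : (0:ℝ) < (K:ℝ)*(μ-δ) := mul_pos hK' hμδ
      have hx0 : (0:ℝ) < (n:ℝ) := lt_trans hKμδ hxlow
      have hTbarle : Tbar ≤ μ - δ := by linarith
      have hTx : (T:ℝ) < (n:ℝ) := by
        calc (T:ℝ) ≤ (K:ℝ)*Tbar := hTle
          _ ≤ (K:ℝ)*(μ-δ) := mul_le_mul_of_nonneg_left hTbarle hK'.le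
          _ < (n:ℝ) := hxlow
      have hTn : T + 1 ≤ n := by
        have : T < n := by exact_mod_cast hTx
        omega
      have hbt : blockTerm μ K T n = (((n:ℝ) - (T:ℝ)) / (n:ℝ)) * P n := by
        rw [blockTerm, if_pos hTn, hP_def]
      have key1 : (T:ℝ)/(n:ℝ) ≤ Tbar/(μ-δ) := by
        have h1 : (T:ℝ)/(n:ℝ) ≤ ((K:ℝ)*Tbar)/((K:ℝ)*(μ-δ)) :=
          div_le_div₀ (mul_nonneg hK'.le hT0.le) hTle hKμδ hxlow.le
        rwa [mul_div_mul_left _ _ (ne_of_gt hK')] at h1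
      have key2 : Tbar/(μ+δ) - e ≤ (T:ℝ)/(n:ℝ) := by
        have hstep : ((K:ℝ)*Tbar - 1)/((K:ℝ)*(μ+δ)) ≤ (T:ℝ)/(n:ℝ) := by
          by_cases h : (K:ℝ)*Tbar - 1 ≤ 0
          · refine le_trans (div_nonpos_iff.mpr (Or.inr ⟨h, ?_⟩)) ?_
            · positivity
            · exact div_nonneg T.cast_nonneg hx0.le
          · exact div_le_div₀ (T.cast_nonneg) hTgt.le hx0 hxhi.le
        have heq : ((K:ℝ)*Tbar - 1)/((K:ℝ)*(μ+δ))
            = Tbar/(μ+δ) - 1/((K:ℝ)*(μ+δ)) := by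
          rw [sub_div, mul_div_mul_left _ _ (ne_of_gt hK')]
        have hee : 1/((K:ℝ)*(μ+δ)) ≤ e := by
          rw [he_def]
          apply one_div_le_one_div_of_le (mul_pos hK' hμδ)
          exact mul_le_mul_of_nonneg_left (by linarith) hK'.le
        rw [heq] at hstep
        linarith [hstep, hee]
      have hrepr : (((n:ℝ) - (T:ℝ)) / (n:ℝ)) - L = Tbar/μ - (T:ℝ)/(n:ℝ) := by
        have hsplit : ((n:ℝ) - (T:ℝ))/(n:ℝ) = 1 - (T:ℝ)/(n:ℝ) := by
          rw [sub_div, div_self (ne_of_gt hx0)]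
        rw [hL_def, hsplit]
        ring
      have hfμ1 : Tbar/μ ≤ Tbar/(μ-δ) :=
        div_le_div_of_nonneg_left hT0.le hμδ (by linarith)
      have hfμ2 : Tbar/(μ+δ) ≤ Tbar/μ :=
        div_le_div_of_nonneg_left hT0.le hμ (by linarith)
      have hg : |(((n:ℝ) - (T:ℝ)) / (n:ℝ)) - L| ≤ cδ + e := by
        rw [hrepr]
        rw [abs_le]
        constructor
        · rw [hcδ_def]; linarith [key1]
        · rw [hcδ_def]; linarith [key2]
      have hdn : d n = ((((n:ℝ) - (T:ℝ)) / (n:ℝ)) - L) * P n := by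
        simp only [hd_def, hbt]
        ring
      have hun : u n = (cδ + e) * P n := by
        simp only [hu_def, hχn, add_zero]
      rw [hdn, hun, abs_mul, abs_of_pos hP']
      exact mul_le_mul_of_nonneg_right hg hP'.le
    · have hχn : χ n = P n := by simp only [hχ_def]; exact if_pos (not_lt.mp hA)
      have hb0 : 0 ≤ blockTerm μ K T n := blockTerm_nonneg hμ hK T n
      have hb1 : blockTerm μ K T n ≤ P n := blockTerm_le hμ hK T n
      have hLP0 : 0 ≤ L * P n := mul_nonneg hL0 hP'.le
      have hLP1 : L * P n ≤ P n := by nlinarith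
      have hdP : |d n| ≤ P n := by
        have hd_eq : d n = blockTerm μ K T n - L * P n := by simp only [hd_def]
        rw [hd_eq, abs_le]
        constructor
        · linarith
        · linarith
      have hun : u n = (cδ + e) * P n + P n := by simp only [hu_def, hχn]
      have h2 : (0:ℝ) ≤ (cδ + e) * P n := mul_nonneg (by linarith) hP'.le
      rw [hun]
      linarith
  -- assemble
  have hPb : Pblock μ K T - L = ∑' n, d n := by
    simp only [hd_def]
    rw [Summable.tsum_sub Sb (SP.mul_left L), tsum_mul_left, tsum_Puser hμ hK, mul_one]
    rfl
  have h1 : |∑' n, d n| ≤ ∑' n, u n := by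
    have habs : |∑' n, d n| ≤ ∑' n, |d n| := by
      have := norm_tsum_le_tsum_norm (f := d) (by simpa [Real.norm_eq_abs] using Sd.abs)
      simpa [Real.norm_eq_abs] using this
    refine le_trans habs (Summable.tsum_le_tsum hdu Sd.abs Su)
  have hχw : ∑' n, χ n ≤ ∑' n, w n := by
    apply Summable.tsum_le_tsum _ Sχ Sw
    intro n
    have hP' := Puser_pos hμ hK n
    simp only [hχ_def, hw_def]
    split
    · next h =>
      have h2 : ((K:ℝ)*δ)^2 ≤ ((n:ℝ)-(K:ℝ)*μ)^2 := by
        have := pow_le_pow_left₀ (by positivity : (0:ℝ) ≤ (K:ℝ)*δ) h 2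
        rwa [sq_abs] at this
      have hfac : (1:ℝ) ≤ ((n:ℝ)-(K:ℝ)*μ)^2 / ((K:ℝ)*δ)^2 := by
        rw [one_le_div (by positivity)]
        exact h2
      calc P n = 1 * P n := (one_mul _).symm
        _ ≤ (((n:ℝ)-(K:ℝ)*μ)^2 / ((K:ℝ)*δ)^2) * P n :=
            mul_le_mul_of_nonneg_right hfac hP'.le
    · positivity
  have hw_val : ∑' n, w n = ((2/7)*μ*(μ+7/2))/((K:ℝ)*δ^2) := by
    have hcongr : ∀ n : ℕ, w n = (1/((K:ℝ)*δ)^2) * (((n:ℝ)-(K:ℝ)*μ)^2 * P n) := by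
      intro n; simp only [hw_def]; ring
    rw [tsum_congr hcongr, tsum_mul_left, hP_def, tsum_var_Puser hμ hK]
    field_simp
  have hu_val : ∑' n, u n = (cδ + e) + ∑' n, χ n := by
    simp only [hu_def]
    rw [Summable.tsum_add (SP.mul_left _) Sχ, tsum_mul_left, tsum_Puser hμ hK, mul_one]
  have : |Pblock μ K T - L| ≤ (cδ + e) + ((2/7)*μ*(μ+7/2))/((K:ℝ)*δ^2) := by
    rw [hPb]
    calc |∑' n, d n| ≤ ∑' n, u n := h1
      _ = (cδ + e) + ∑' n, χ n := hu_val
      _ ≤ (cδ + e) + ∑' n, w n := by linarith [hχw]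
      _ = (cδ + e) + ((2/7)*μ*(μ+7/2))/((K:ℝ)*δ^2) := by rw [hw_val]
  rw [hL_def] at this
  rw [hcδ_def, he_def] at this
  linarith [this]

end Aux

/-- Proposition 1, under-provisioned case: if `0 < T̄ < μ` then
`P_b(K, ⌊K·T̄⌋) → 1 − T̄/μ` as `K → ∞`. -/
theorem Pblock_limit_under (μ : ℝ) (hμ : 0 < μ) (Tbar : ℝ)
    (hT0 : 0 < Tbar) (hT : Tbar < μ) :
    Filter.Tendsto (fun K : ℕ => Pblock μ K ⌊(K : ℝ) * Tbar⌋₊)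
      Filter.atTop (nhds (1 - Tbar / μ)) := by
  rw [Metric.tendsto_atTop]
  intro ε hε
  set δ : ℝ := min (μ - Tbar) (min (μ/2) (ε*μ^2/(8*Tbar))) with hδ_def
  have hδ0 : 0 < δ := by
    apply lt_min (by linarith)
    exact lt_min (by positivity) (by positivity)
  have hδ1 : δ ≤ μ - Tbar := min_le_left _ _
  have hδ2 : δ ≤ μ/2 := le_trans (min_le_right _ _) (min_le_left _ _)
  have hδ3 : δ ≤ ε*μ^2/(8*Tbar) := le_trans (min_le_right _ _) (min_le_right _ _)
  have hμδ : 0 < μ - δ := by linarith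
  have hμδ' : 0 < μ + δ := by linarith
  have hc_half : Tbar/(μ-δ) - Tbar/(μ+δ) ≤ ε/2 := by
    have e1 : Tbar/(μ-δ) - Tbar/(μ+δ) = 2*Tbar*δ/((μ-δ)*(μ+δ)) := by
      field_simp
      ring
    rw [e1, div_le_iff₀ (by positivity)]
    have h8 : δ * (8*Tbar) ≤ ε*μ^2 := (le_div_iff₀ (by positivity)).mp hδ3
    have hδμ : δ*δ ≤ (μ/2)*(μ/2) := mul_le_mul hδ2 hδ2 hδ0.le (by positivity)
    have hεδ : ε*(δ*δ) ≤ ε*((μ/2)*(μ/2)) := mul_le_mul_of_nonneg_left hδμ hε.le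
    nlinarith [h8, hεδ]
  obtain ⟨C, hC0, hC_def⟩ : ∃ C : ℝ, 0 < C ∧ C = 1/(μ-δ) + (2/7)*μ*(μ+7/2)/δ^2 := by
    refine ⟨_, ?_, rfl⟩
    have h1 : 0 < 1/(μ-δ) := one_div_pos.mpr hμδ
    have h2 : 0 < (2/7)*μ*(μ+7/2)/δ^2 :=
      div_pos (mul_pos (mul_pos (by norm_num) hμ) (by linarith)) (pow_pos hδ0 2)
    linarith
  obtain ⟨N₁, hN₁⟩ := exists_nat_gt (2*C/ε)
  refine ⟨max N₁ 1, fun K hK => ?_⟩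
  have hK1 : 1 ≤ K := le_trans (le_max_right _ _) hK
  have hKN : N₁ ≤ K := le_trans (le_max_left _ _) hK
  have hK0 : 0 < K := hK1
  have hKc : (0:ℝ) < (K:ℝ) := by exact_mod_cast hK0
  rw [Real.dist_eq]
  have hb := abs_Pblock_sub_le hμ Tbar hT0 hT hδ0 hδ1 hK0
  have htail : 1/((K:ℝ)*(μ-δ)) + ((2/7)*μ*(μ+7/2))/((K:ℝ)*δ^2) = C/(K:ℝ) := by
    rw [hC_def]
    field_simp
  have hCK : C/(K:ℝ) < ε/2 := by
    have hN₁K : (N₁:ℝ) ≤ (K:ℝ) := by exact_mod_cast hKN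
    have h2CK : 2*C/ε < (K:ℝ) := lt_of_lt_of_le hN₁ hN₁K
    rw [div_lt_iff₀ hε] at h2CK
    rw [div_lt_iff₀ hKc, show ε/2*(K:ℝ) = (K:ℝ)*ε/2 by ring]
    linarith
  calc |Pblock μ K ⌊(K:ℝ)*Tbar⌋₊ - (1 - Tbar/μ)|
      ≤ (Tbar/(μ-δ) - Tbar/(μ+δ)) + 1/((K:ℝ)*(μ-δ))
        + ((2/7)*μ*(μ+7/2))/((K:ℝ)*δ^2) := hb
    _ = (Tbar/(μ-δ) - Tbar/(μ+δ)) + C/(K:ℝ) := by rw [← htail]; ring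
    _ < ε := by linarith
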